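/- Let R be a finite commutative chain ring and S a Galois extension of R of degree m (so S is a finite chain ring). For any linear code C of length n over S (an S-submodule of S^n), k(C) = k(soc(C)) = k(E(C)) and d(C) = d(soc(C)) = d(E(C)), i.e., C has the same rank and the same minimum rank distance as its socle and its injective envelope. -/

import Mathlib

open IsLocalRing

/-- The rank of a submodule `N`: the smallest number of elements generating `N`. -/
noncomputable def subrank {R M : Type*} [Semiring R] [AddCommMonoid M] [Module R M]
    (N : Submodule R M) : ℕ :=
  sInf {k | ∃ f : Fin k → M, Submodule.span R (Set.range f) = N}

/-- The rank of a vector `u ∈ S^n` over `R`: the smallest number of generators of the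
`R`-submodule of `S` generated by the coordinates of `u` (i.e. of the support of `u`). -/
noncomputable def vecrank (R : Type*) {S : Type*} {n : ℕ} [Semiring R] [AddCommMonoid S]
    [Module R S] (u : Fin n → S) : ℕ :=
  subrank (Submodule.span R (Set.range u))

/-- The minimum rank distance of a linear code `C ⊆ S^n`, ranks being taken over `K`. -/
noncomputable def minrkdist (K : Type*) {S : Type*} {n : ℕ} [Semiring K] [Ring S]
    [Module K S] (C : Submodule S (Fin n → S)) : ℕ :=
  sInf {d | ∃ u ∈ C, ∃ v ∈ C, u ≠ v ∧ vecrank K (u - v) = d}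

/-- The socle of a submodule `C` of an ambient module, as a submodule of the ambient
module: the sum of the minimal nonzero submodules contained in `C`. -/
noncomputable def socleIn {R M : Type*} [Semiring R] [AddCommMonoid M] [Module R M]
    (C : Submodule R M) : Submodule R M :=
  sSup {N : Submodule R M | IsAtom N ∧ N ≤ C}

/-! ### Auxiliary lemmas on minimal generating numbers -/

section GenSet

variable {R M M' : Type*} [Semiring R] [AddCommMonoid M] [AddCommMonoid M']
  [Module R M] [Module R M']

lemma genset_nonempty [Finite M] (N : Submodule R M) :
    {k | ∃ f : Fin k → M, Submodule.span R (Set.range f) = N}.Nonempty := by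
  haveI : Fintype ↥N := Fintype.ofFinite _
  refine ⟨Fintype.card ↥N, Subtype.val ∘ (Fintype.equivFin ↥N).symm, ?_⟩
  rw [Set.range_comp, Equiv.range_eq_univ, Set.image_univ, Subtype.range_coe,
    Submodule.span_eq]

lemma subrank_map_le [Finite M] (g : M →ₗ[R] M') (P : Submodule R M) :
    subrank (P.map g) ≤ subrank P := by
  obtain ⟨f, hf⟩ : ∃ f : Fin (subrank P) → M, Submodule.span R (Set.range f) = P :=
    Nat.sInf_mem (genset_nonempty P)
  refine Nat.sInf_le ⟨⇑g ∘ f, ?_⟩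
  rw [Set.range_comp, Submodule.span_image, hf]

end GenSet

lemma vecrank_smul_le (R : Type*) {S : Type*} {n : ℕ} [CommSemiring R] [Semiring S]
    [Algebra R S] [Finite S] (c : S) (w : Fin n → S) :
    vecrank R (c • w) ≤ vecrank R w := by
  have h : Set.range (c • w) = ⇑(LinearMap.mulLeft R c) '' Set.range w := by
    rw [← Set.range_comp]
    rfl
  rw [vecrank, h, Submodule.span_image]
  exact subrank_map_le _ _

/-! ### The socle over a finite chain ring -/

section ChainRing

variable {S : Type*} [CommRing S] [IsLocalRing S] [Finite S]
variable {M : Type*} [AddCommGroup M] [Module S M] [Finite M]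

/-- The socle of `N` is `N ⊓ ker (θ • ·)` when the maximal ideal is generated by `θ`. -/
lemma socleIn_eq_inf_ker {θ : S} (hθ : maximalIdeal S = Ideal.span {θ})
    (N : Submodule S M) :
    socleIn N = N ⊓ LinearMap.ker (LinearMap.lsmul S M θ) := by
  haveI : IsNoetherian S M := isNoetherian_of_finite S M
  apply le_antisymm
  · apply sSup_le
    rintro N' ⟨hat, hle⟩
    refine le_inf hle ?_
    have hfg : N'.FG := IsNoetherian.noetherian N'
    have hsm : maximalIdeal S • N' ≠ N' := by
      intro h
      exact hat.1 (Submodule.eq_bot_of_le_smul_of_le_jacobson_bot (maximalIdeal S) N' hfg h.ge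
        (by rw [jacobson_eq_maximalIdeal ⊥ bot_ne_top]))
    have hlt : maximalIdeal S • N' < N' := lt_of_le_of_ne Submodule.smul_le_right hsm
    have hbot := hat.2 _ hlt
    intro x hx
    have hmem : θ • x ∈ maximalIdeal S • N' :=
      Submodule.smul_mem_smul (by rw [hθ]; exact Ideal.mem_span_singleton_self θ) hx
    rw [hbot] at hmem
    simpa [LinearMap.mem_ker] using hmem
  · rintro x ⟨hxN, hxK⟩
    rcases eq_or_ne x 0 with rfl | hx0
    · exact zero_mem _
    have hθx : θ • x = 0 := by simpa [LinearMap.mem_ker] using hxK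
    have hatom : IsAtom (Submodule.span S {x}) := by
      constructor
      · simpa [Submodule.span_singleton_eq_bot] using hx0
      · intro b hb
        by_contra hbb
        obtain ⟨y, hyb, hy0⟩ := (Submodule.ne_bot_iff b).mp hbb
        obtain ⟨c, rfl⟩ := Submodule.mem_span_singleton.mp (hb.le hyb)
        have hcunit : IsUnit c := by
          by_contra hc
          have hcm : c ∈ maximalIdeal S := hc
          rw [hθ] at hcm
          obtain ⟨d, hd⟩ := Ideal.mem_span_singleton'.mp hcm
          exact hy0 (by rw [← hd, mul_smul, hθx, smul_zero])
        have hxb : x ∈ b := by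
          have hmem : ((hcunit.unit⁻¹ : Sˣ) : S) • (c • x) ∈ b := b.smul_mem _ hyb
          rwa [← mul_smul, IsUnit.val_inv_mul, one_smul] at hmem
        exact hb.2 ((Submodule.span_singleton_le_iff_mem x b).mpr hxb)
    exact le_sSup (show _ ∈ {N' : Submodule S M | IsAtom N' ∧ N' ≤ N} from
      ⟨hatom, (Submodule.span_singleton_le_iff_mem x N).mpr hxN⟩)
      (Submodule.mem_span_singleton_self x)

lemma subrank_genset_eq (N : Submodule S M) :
    {k | ∃ f : Fin k → M, Submodule.span S (Set.range f) = N}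
      = {k | ∃ g : Fin k → ↥N, Submodule.span S (Set.range g) = ⊤} := by
  ext t
  constructor
  · rintro ⟨f, hf⟩
    have hmem : ∀ i, f i ∈ N := fun i => hf ▸ Submodule.subset_span (Set.mem_range_self i)
    refine ⟨fun i => ⟨f i, hmem i⟩, ?_⟩
    apply Submodule.map_injective_of_injective N.injective_subtype
    rw [Submodule.map_subtype_top, Submodule.map_span]
    have h : N.subtype '' Set.range (fun i => (⟨f i, hmem i⟩ : ↥N)) = Set.range f := by
      rw [← Set.range_comp]; rfl
    rw [h, hf]
  · rintro ⟨g, hg⟩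
    refine ⟨fun i => ((g i : M)), ?_⟩
    have h : Set.range (fun i => ((g i : M))) = N.subtype '' Set.range g := by
      rw [← Set.range_comp]; rfl
    rw [h, Submodule.span_image, hg, Submodule.map_subtype_top]

lemma mingen_eq_finrank (V : Type*) [AddCommGroup V] [Module S V] [Finite V] :
    sInf {k | ∃ g : Fin k → V, Submodule.span S (Set.range g) = ⊤}
      = Module.finrank (S ⧸ maximalIdeal S)
        (V ⧸ (maximalIdeal S • ⊤ : Submodule S V)) := by
  classical
  haveI : Module.Finite S V := Module.Finite.of_finite
  set Q := V ⧸ (maximalIdeal S • ⊤ : Submodule S V) with hQ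
  letI : Field (S ⧸ maximalIdeal S) := Ideal.Quotient.field _
  haveI : Finite Q := Finite.of_surjective _ (Submodule.mkQ_surjective _)
  haveI : Module.Finite (S ⧸ maximalIdeal S) Q := Module.Finite.of_finite
  have hsurj : Function.Surjective ⇑(algebraMap S (S ⧸ maximalIdeal S)) := by
    rw [Ideal.Quotient.algebraMap_eq]; exact Ideal.Quotient.mk_surjective
  apply le_antisymm
  · let b := Module.finBasis (S ⧸ maximalIdeal S) Q
    choose g hg using fun i => Submodule.mkQ_surjective (maximalIdeal S • ⊤ : Submodule S V) (b i)
    apply Nat.sInf_le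
    refine ⟨g, ?_⟩
    rw [← IsLocalRing.map_mkQ_eq_top (R := S), Submodule.map_span, ← Set.range_comp]
    have h1 : (⇑(maximalIdeal S • ⊤ : Submodule S V).mkQ ∘ g) = fun i => b i :=
      funext fun i => hg i
    rw [h1, ← Submodule.restrictScalars_span S (S ⧸ maximalIdeal S) hsurj,
      Submodule.restrictScalars_eq_top_iff]
    exact b.span_eq
  · refine le_csInf (genset_nonempty (⊤ : Submodule S V)) ?_
    rintro t ⟨g, hg⟩
    have h1 : Submodule.span S
        (Set.range (⇑(maximalIdeal S • ⊤ : Submodule S V).mkQ ∘ g)) = ⊤ := by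
      rw [Set.range_comp, Submodule.span_image, hg, Submodule.map_top, Submodule.range_mkQ]
    have h2 : Submodule.span (S ⧸ maximalIdeal S)
        (Set.range (⇑(maximalIdeal S • ⊤ : Submodule S V).mkQ ∘ g)) = ⊤ := by
      apply (Submodule.restrictScalars_eq_top_iff S _ _).mp
      rw [Submodule.restrictScalars_span S _ hsurj, h1]
    haveI : Fintype ↑(Set.range (⇑(maximalIdeal S • ⊤ : Submodule S V).mkQ ∘ g)) :=
      Fintype.ofFinite _
    have h3 := finrank_span_le_card (R := S ⧸ maximalIdeal S)
      (Set.range (⇑(maximalIdeal S • ⊤ : Submodule S V).mkQ ∘ g))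
    rw [h2, finrank_top] at h3
    refine h3.trans ?_
    rw [Set.toFinset_card]
    exact (Fintype.card_range_le _).trans (by simp)

lemma card_quot_eq_card_ker {θ : S} (hθ : maximalIdeal S = Ideal.span {θ})
    (V : Type*) [AddCommGroup V] [Module S V] [Finite V] :
    Nat.card (V ⧸ (maximalIdeal S • ⊤ : Submodule S V))
      = Nat.card (LinearMap.ker (LinearMap.lsmul S V θ)) := by
  set f := LinearMap.lsmul S V θ with hf
  have hrange : LinearMap.range f = (maximalIdeal S • ⊤ : Submodule S V) := by
    apply le_antisymm
    · rintro x ⟨y, rfl⟩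
      exact Submodule.smul_mem_smul (by rw [hθ]; exact Ideal.mem_span_singleton_self θ)
        Submodule.mem_top
    · refine Submodule.smul_le.mpr fun s hs y _ => ?_
      rw [hθ] at hs
      obtain ⟨c, rfl⟩ := Ideal.mem_span_singleton'.mp hs
      rw [mul_smul]
      exact Submodule.smul_mem _ c ⟨y, rfl⟩
  have h1 := Submodule.card_eq_card_quotient_mul_card (LinearMap.range f)
  have h2 := Submodule.card_eq_card_quotient_mul_card (LinearMap.ker f)
  have h3 : Nat.card (V ⧸ LinearMap.ker f) = Nat.card ↥(LinearMap.range f) :=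
    Nat.card_congr (LinearMap.quotKerEquivRange f).toEquiv
  have hpos : 0 < Nat.card ↥(LinearMap.range f) := Nat.card_pos
  apply Nat.eq_of_mul_eq_mul_left hpos
  calc Nat.card ↥(LinearMap.range f) * Nat.card (V ⧸ (maximalIdeal S • ⊤ : Submodule S V))
      = Nat.card ↥(LinearMap.range f) * Nat.card (V ⧸ LinearMap.range f) := by rw [hrange]
    _ = Nat.card V := h1.symm
    _ = Nat.card ↥(LinearMap.ker f) * Nat.card (V ⧸ LinearMap.ker f) := h2
    _ = Nat.card ↥(LinearMap.ker f) * Nat.card ↥(LinearMap.range f) := by rw [h3]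
    _ = Nat.card ↥(LinearMap.range f) * Nat.card ↥(LinearMap.ker f) := Nat.mul_comm _ _

/-- The key counting identity: `q ^ k(N) = |soc(N)|` over a finite chain ring. -/
lemma pow_subrank_eq_card_socle {θ : S} (hθ : maximalIdeal S = Ideal.span {θ})
    (N : Submodule S M) :
    Nat.card (S ⧸ maximalIdeal S) ^ subrank N = Nat.card ↥(socleIn N) := by
  classical
  letI : Field (S ⧸ maximalIdeal S) := Ideal.Quotient.field _
  set Q := (↥N ⧸ (maximalIdeal S • ⊤ : Submodule S ↥N)) with hQdef
  haveI : Finite Q := Finite.of_surjective _ (Submodule.mkQ_surjective _)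
  have h1 : subrank N = Module.finrank (S ⧸ maximalIdeal S) Q := by
    rw [subrank, subrank_genset_eq N, mingen_eq_finrank ↥N]
  have h2 : Nat.card Q = Nat.card (S ⧸ maximalIdeal S) ^ subrank N := by
    rw [h1]
    letI : Fintype Q := Fintype.ofFinite _
    haveI : Finite (S ⧸ maximalIdeal S) :=
      Finite.of_surjective _ Ideal.Quotient.mk_surjective
    letI : Fintype (S ⧸ maximalIdeal S) := Fintype.ofFinite _
    rw [Nat.card_eq_fintype_card, Nat.card_eq_fintype_card]
    exact Module.card_eq_pow_finrank
  have h3 := card_quot_eq_card_ker hθ ↥N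
  have e : ↥(LinearMap.ker (LinearMap.lsmul S ↥N θ)) ≃ ↥(socleIn N) := by
    rw [socleIn_eq_inf_ker hθ N]
    have fwd : ∀ x : ↥(LinearMap.ker (LinearMap.lsmul S ↥N θ)),
        ((x : ↥N) : M) ∈ N ⊓ LinearMap.ker (LinearMap.lsmul S M θ) := by
      intro x
      have hx : θ • (x : ↥N) = 0 := x.2
      have hx' : θ • ((x : ↥N) : M) = 0 := by
        rw [← Submodule.coe_smul, hx, Submodule.coe_zero]
      exact Submodule.mem_inf.mpr ⟨(x : ↥N).2, by simpa [LinearMap.mem_ker] using hx'⟩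
    have bwd : ∀ y : ↥(N ⊓ LinearMap.ker (LinearMap.lsmul S M θ)),
        (⟨(y : M), (Submodule.mem_inf.mp y.2).1⟩ : ↥N) ∈
          LinearMap.ker (LinearMap.lsmul S ↥N θ) := by
      intro y
      have hy : θ • (y : M) = 0 := by
        simpa [LinearMap.mem_ker] using (Submodule.mem_inf.mp y.2).2
      rw [LinearMap.mem_ker, LinearMap.lsmul_apply]
      exact Subtype.ext (by simpa using hy)
    exact ⟨fun x => ⟨_, fwd x⟩, fun y => ⟨_, bwd y⟩, fun x => rfl, fun y => rfl⟩
  rw [← h2, h3]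
  exact Nat.card_congr e

end ChainRing

/-! ### Auxiliary lemmas on the minimum rank distance -/

lemma minrk_set_eq {K S' : Type*} {n : ℕ} [Semiring K] [Ring S'] [Module K S']
    (C : Submodule S' (Fin n → S')) :
    {d | ∃ u ∈ C, ∃ v ∈ C, u ≠ v ∧ vecrank K (u - v) = d}
      = {d | ∃ w ∈ C, w ≠ 0 ∧ vecrank K w = d} := by
  ext d
  constructor
  · rintro ⟨u, hu, v, hv, hne, rfl⟩
    exact ⟨u - v, sub_mem hu hv, sub_ne_zero.mpr hne, rfl⟩
  · rintro ⟨w, hw, h0, rfl⟩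
    exact ⟨w, hw, 0, zero_mem _, h0, by rw [sub_zero]⟩

lemma minrk_eq_of_dominates {K S' : Type*} {n : ℕ} [Semiring K] [Ring S'] [Module K S']
    {C1 C2 : Submodule S' (Fin n → S')} (h12 : C1 ≤ C2)
    (hdom : ∀ w ∈ C2, w ≠ 0 → ∃ w', w' ∈ C1 ∧ w' ≠ 0 ∧ vecrank K w' ≤ vecrank K w) :
    minrkdist K C2 = minrkdist K C1 := by
  rw [minrkdist, minrkdist, minrk_set_eq, minrk_set_eq]
  rcases eq_or_ne C2 ⊥ with hbot | hne
  · have hbot1 : C1 = ⊥ := le_bot_iff.mp (hbot ▸ h12)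
    have e1 : {d | ∃ w ∈ C1, w ≠ 0 ∧ vecrank K w = d} = ∅ := by
      rw [hbot1]; ext d; simp
    have e2 : {d | ∃ w ∈ C2, w ≠ 0 ∧ vecrank K w = d} = ∅ := by
      rw [hbot]; ext d; simp
    rw [e1, e2]
  · obtain ⟨w, hw, h0⟩ := (Submodule.ne_bot_iff C2).mp hne
    have hne2 : {d | ∃ w ∈ C2, w ≠ 0 ∧ vecrank K w = d}.Nonempty :=
      ⟨vecrank K w, w, hw, h0, rfl⟩
    obtain ⟨w', hw'1, hw'0, _⟩ := hdom w hw h0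
    have hne1 : {d | ∃ w ∈ C1, w ≠ 0 ∧ vecrank K w = d}.Nonempty :=
      ⟨vecrank K w', w', hw'1, hw'0, rfl⟩
    apply le_antisymm
    · obtain ⟨w1, hw1, h01, heq⟩ := Nat.sInf_mem hne1
      exact Nat.sInf_le ⟨w1, h12 hw1, h01, heq⟩
    · obtain ⟨w2, hw2, h02, heq2⟩ := Nat.sInf_mem hne2
      obtain ⟨w'', hmem, h0'', hle''⟩ := hdom w2 hw2 h02
      calc sInf {d | ∃ w ∈ C1, w ≠ 0 ∧ vecrank K w = d}
          ≤ vecrank K w'' := Nat.sInf_le ⟨w'', hmem, h0'', rfl⟩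
        _ ≤ vecrank K w2 := hle''
        _ = sInf {d | ∃ w ∈ C2, w ≠ 0 ∧ vecrank K w = d} := heq2

/-- Let `R` be a finite commutative chain ring and `S` a Galois extension of
`R` of degree `m` (so `S` is a finite chain ring).  For any linear code `C` of length `n`
over `S` (an `S`-submodule of `S^n`) with injective envelope `E ⊆ S^n` (an injective
`S`-module containing `C` essentially), `k(C) = k(soc(C)) = k(E(C))` and
`d(C) = d(soc(C)) = d(E(C))`. -/
theorem rank_and_minDist_eq_of_socle_and_injectiveEnvelope
    (R S : Type*) [CommRing R] [Finite R] [IsLocalRing R] [IsPrincipalIdealRing R]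
    [CommRing S] [Finite S] [IsLocalRing S] [IsPrincipalIdealRing S]
    [Algebra R S] [Module.Free R S]
    (m : ℕ) (hm : Module.finrank R S = m)
    (hGal : maximalIdeal S = Ideal.map (algebraMap R S) (maximalIdeal R))
    (n : ℕ) (C E : Submodule S (Fin n → S)) (hCE : C ≤ E) [Module.Injective S ↥E]
    (hess : ∀ N : Submodule S (Fin n → S), N ≤ E → N ≠ ⊥ → N ⊓ C ≠ ⊥) :
    (subrank C = subrank (socleIn C) ∧ subrank C = subrank E) ∧
    (minrkdist R C = minrkdist R (socleIn C) ∧ minrkdist R C = minrkdist R E) := by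
  classical
  obtain ⟨θ, hθ⟩ := (IsPrincipalIdealRing.principal (maximalIdeal S)).principal
  -- basic facts
  have hq : 1 < Nat.card (S ⧸ maximalIdeal S) := by
    haveI : Finite (S ⧸ maximalIdeal S) :=
      Finite.of_surjective _ Ideal.Quotient.mk_surjective
    haveI : Nontrivial (S ⧸ maximalIdeal S) :=
      Ideal.Quotient.nontrivial_iff.mpr (Ideal.IsMaximal.ne_top inferInstance)
    exact Finite.one_lt_card
  -- socle of E equals socle of C
  have hsocEC : socleIn E = socleIn C := by
    have hsets : {N' : Submodule S (Fin n → S) | IsAtom N' ∧ N' ≤ E}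
        = {N' : Submodule S (Fin n → S) | IsAtom N' ∧ N' ≤ C} := by
      ext N'
      constructor
      · rintro ⟨ha, hle⟩
        refine ⟨ha, ?_⟩
        have h1 : N' ⊓ C ≠ ⊥ := hess N' hle ha.1
        rcases (inf_le_left : N' ⊓ C ≤ N').lt_or_eq with hlt | heq
        · exact absurd (ha.2 _ hlt) h1
        · exact heq ▸ inf_le_right
      · rintro ⟨ha, hle⟩
        exact ⟨ha, hle.trans hCE⟩
    rw [socleIn, socleIn, hsets]
  -- idempotence of the socle
  have hidem : socleIn (socleIn C) = socleIn C := by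
    rw [socleIn_eq_inf_ker hθ (socleIn C), socleIn_eq_inf_ker hθ C, inf_assoc, inf_idem]
  -- the three counting identities
  have hC := pow_subrank_eq_card_socle hθ C
  have hS := pow_subrank_eq_card_socle hθ (socleIn C)
  have hE := pow_subrank_eq_card_socle hθ E
  have r1 : subrank C = subrank (socleIn C) := by
    apply Nat.pow_right_injective hq
    show Nat.card (S ⧸ maximalIdeal S) ^ subrank C
        = Nat.card (S ⧸ maximalIdeal S) ^ subrank (socleIn C)
    rw [hC, hS, hidem]
  have r2 : subrank C = subrank E := by
    apply Nat.pow_right_injective hq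
    show Nat.card (S ⧸ maximalIdeal S) ^ subrank C
        = Nat.card (S ⧸ maximalIdeal S) ^ subrank E
    rw [hC, hE, hsocEC]
  -- nilpotency of θ
  have hnil : ∃ e, θ ^ e = (0 : S) := by
    have h := IsArtinianRing.isNilpotent_jacobson_bot (R := S)
    rw [jacobson_eq_maximalIdeal ⊥ bot_ne_top, hθ] at h
    obtain ⟨e, he⟩ := h
    refine ⟨e, ?_⟩
    have hmem := Ideal.pow_mem_pow
      (show θ ∈ Submodule.span S {θ} from Ideal.mem_span_singleton_self θ) e
    rw [he] at hmem
    simpa using hmem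
  obtain ⟨e, he⟩ := hnil
  -- domination for the socle
  have hdom1 : ∀ w ∈ C, w ≠ 0 →
      ∃ w', w' ∈ socleIn C ∧ w' ≠ 0 ∧ vecrank R w' ≤ vecrank R w := by
    intro w hw h0
    have hex : ∃ j, θ ^ j • w = 0 := ⟨e, by rw [he, zero_smul]⟩
    have hj0 : Nat.find hex ≠ 0 := by
      intro h
      have hsp := Nat.find_spec hex
      rw [h, pow_zero, one_smul] at hsp
      exact h0 hsp
    refine ⟨θ ^ (Nat.find hex - 1) • w, ?_, ?_, vecrank_smul_le R _ w⟩
    · rw [socleIn_eq_inf_ker hθ C]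
      refine Submodule.mem_inf.mpr ⟨Submodule.smul_mem _ _ hw, ?_⟩
      rw [LinearMap.mem_ker, LinearMap.lsmul_apply, ← mul_smul, ← pow_succ',
        Nat.sub_add_cancel (Nat.one_le_iff_ne_zero.mpr hj0)]
      exact Nat.find_spec hex
    · exact Nat.find_min hex (Nat.sub_lt (Nat.pos_of_ne_zero hj0) one_pos)
  -- domination for the envelope
  have hdom2 : ∀ w ∈ E, w ≠ 0 →
      ∃ w', w' ∈ C ∧ w' ≠ 0 ∧ vecrank R w' ≤ vecrank R w := by
    intro w hw h0
    have hle : Submodule.span S {w} ≤ E := (Submodule.span_singleton_le_iff_mem w E).mpr hw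
    have hne : Submodule.span S {w} ≠ ⊥ := by
      simpa [Submodule.span_singleton_eq_bot] using h0
    obtain ⟨x, hx, hx0⟩ := (Submodule.ne_bot_iff _).mp (hess _ hle hne)
    obtain ⟨hx1, hx2⟩ := Submodule.mem_inf.mp hx
    obtain ⟨c, rfl⟩ := Submodule.mem_span_singleton.mp hx1
    exact ⟨c • w, hx2, hx0, vecrank_smul_le R c w⟩
  have hsocle_le : socleIn C ≤ C := sSup_le fun N' hN' => hN'.2
  have d1 : minrkdist R C = minrkdist R (socleIn C) :=
    minrk_eq_of_dominates hsocle_le hdom1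
  have d2 : minrkdist R C = minrkdist R E :=
    (minrk_eq_of_dominates hCE hdom2).symm
  exact ⟨⟨r1, r2⟩, ⟨d1, d2⟩⟩
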